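/- Fix s ∈ (0, 1). The series u(s) := Σ_k λ_k^{−s} ⟨f, ψ_k⟩ ψ_k converges in H, the H-valued map y ↦ e^{(1−s)y} w(y) is Bochner integrable on ℝ, where w(y) := Σ_k (e^y + λ_k)^{−1} ⟨f, ψ_k⟩ ψ_k, and the Balakrishnan representation u(s) = (sin(sπ)/π) ∫_{−∞}^{∞} e^{(1−s)y} w(y) dy holds. -/

import Mathlib

open MeasureTheory Real Set

lemma betaAux {s : ℝ} (hs : s ∈ Set.Ioo (0:ℝ) 1) (x : ℝ) (hx : x ∈ Ioc (0:ℝ) 1) :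
    (((x:ℂ)) ^ ((1 - s : ℂ) - 1) * ((1:ℂ) - x) ^ ((s:ℂ) - 1))
      = ((x ^ (-s) * (1 - x) ^ (s - 1) : ℝ) : ℂ) := by
  obtain ⟨hx0, hx1⟩ := hx
  have h1 : ((1 - s : ℂ) - 1) = ((-s : ℝ) : ℂ) := by push_cast; ring
  have h2 : ((s : ℂ) - 1) = ((s - 1 : ℝ) : ℂ) := by push_cast; ring
  have h3 : ((1:ℂ) - x) = ((1 - x : ℝ) : ℂ) := by push_cast; ring
  rw [h1, h2, h3, ← Complex.ofReal_cpow hx0.le, ← Complex.ofReal_cpow (by linarith),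
    ← Complex.ofReal_mul]

lemma betaRealIntegrable {s : ℝ} (hs : s ∈ Set.Ioo (0:ℝ) 1) :
    IntegrableOn (fun x : ℝ => x ^ (-s) * (1 - x) ^ (s - 1)) (Ioo (0:ℝ) 1) := by
  obtain ⟨hs0, hs1⟩ := hs
  have hconv := Complex.betaIntegral_convergent (u := (1 - s : ℂ)) (v := (s : ℂ))
    (by simpa using sub_pos.mpr hs1) (by simpa using hs0)
  rw [intervalIntegrable_iff_integrableOn_Ioc_of_le zero_le_one] at hconv
  have := (hconv.congr_fun (betaAux ⟨hs0, hs1⟩) measurableSet_Ioc)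
  have h2 : IntegrableOn (fun x : ℝ => ((x ^ (-s) * (1 - x) ^ (s - 1) : ℝ) : ℂ)) (Ioo (0:ℝ) 1) :=
    this.mono_set Ioo_subset_Ioc_self
  have h3 : Integrable (fun x : ℝ => x ^ (-s) * (1 - x) ^ (s - 1)) (volume.restrict (Ioo (0:ℝ) 1)) := by
    simpa using (Complex.reCLM.integrable_comp h2).congr (Filter.Eventually.of_forall (by simp))
  exact h3

lemma betaReal {s : ℝ} (hs : s ∈ Set.Ioo (0:ℝ) 1) :
    ∫ x in Ioo (0:ℝ) 1, x ^ (-s) * (1 - x) ^ (s - 1) = π / Real.sin (π * s) := by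
  obtain ⟨hs0, hs1⟩ := hs
  have hu : (0:ℝ) < 1 - s := by linarith
  have hbeta : Complex.betaIntegral (1 - s) s = ((π / Real.sin (π * s) : ℝ) : ℂ) := by
    have h1 := Complex.Gamma_mul_Gamma_eq_betaIntegral (s := (1 - s : ℂ)) (t := (s : ℂ))
      (by simpa using hu) (by simpa using hs0)
    rw [show ((1:ℂ) - s) + s = 1 by ring, Complex.Gamma_one, one_mul] at h1
    have h2 := Complex.Gamma_mul_Gamma_one_sub (s : ℂ)
    rw [mul_comm] at h1
    rw [← h1, h2]
    push_cast
    ring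
  have hiv : Complex.betaIntegral (1 - s) s
      = ((∫ x in Ioo (0:ℝ) 1, x ^ (-s) * (1 - x) ^ (s - 1) : ℝ) : ℂ) := by
    rw [Complex.betaIntegral, intervalIntegral.integral_of_le zero_le_one,
      setIntegral_congr_fun measurableSet_Ioc (betaAux ⟨hs0, hs1⟩),
      integral_Ioc_eq_integral_Ioo]
    exact integral_ofReal
  rw [hiv] at hbeta
  exact_mod_cast hbeta

section Key
variable {s : ℝ}

lemma phi_img : (fun x : ℝ => x / (1 - x)) '' Ioo 0 1 = Ioi (0:ℝ) := by
  ext u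
  constructor
  · rintro ⟨x, ⟨hx0, hx1⟩, rfl⟩
    exact div_pos hx0 (by linarith)
  · intro hu
    refine ⟨u / (1 + u), ⟨div_pos hu (by linarith [mem_Ioi.mp hu]), ?_⟩, ?_⟩
    · rw [div_lt_one (by linarith [mem_Ioi.mp hu])]; linarith [mem_Ioi.mp hu]
    · have h1 : (0:ℝ) < 1 + u := by linarith [mem_Ioi.mp hu]
      field_simp
      ring

lemma phi_deriv : ∀ x ∈ Ioo (0:ℝ) 1,
    HasDerivWithinAt (fun x : ℝ => x / (1 - x)) (((1 - x) ^ 2)⁻¹) (Ioo 0 1) x := by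
  intro x hx
  have hne : (1 - x) ≠ 0 := by have := hx.2; intro h; simp only [mem_Ioo] at hx; linarith [sub_eq_zero.mp h]
  have h := (hasDerivAt_id x).div ((hasDerivAt_id x).const_sub 1) hne
  simp only [id] at h
  have h2 : (1 * (1 - x) - x * -1) / (1 - x) ^ 2 = ((1 - x) ^ 2)⁻¹ := by
    field_simp
    ring
  rw [h2] at h
  exact h.hasDerivWithinAt

lemma phi_inj : InjOn (fun x : ℝ => x / (1 - x)) (Ioo 0 1) := by
  intro a ha b hb h
  have hna : (1:ℝ) - a ≠ 0 := by simp only [mem_Ioo] at ha; intro hc; linarith [sub_eq_zero.mp hc]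
  have hnb : (1:ℝ) - b ≠ 0 := by simp only [mem_Ioo] at hb; intro hc; linarith [sub_eq_zero.mp hc]
  field_simp at h
  nlinarith [h]

lemma g1_congr (hs : s ∈ Set.Ioo (0:ℝ) 1) : ∀ x ∈ Ioo (0:ℝ) 1,
    |((1 - x) ^ 2)⁻¹| • ((x / (1 - x)) ^ (-s) * (1 + x / (1 - x))⁻¹)
      = x ^ (-s) * (1 - x) ^ (s - 1) := by
  intro x hx
  obtain ⟨hx0, hx1⟩ := hx
  have h1 : (0:ℝ) < 1 - x := by linarith
  have h2 : (1:ℝ) + x / (1 - x) = (1 - x)⁻¹ := by field_simp; ring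
  rw [h2, inv_inv, smul_eq_mul, abs_of_pos (by positivity),
    Real.div_rpow hx0.le h1.le, Real.rpow_sub h1, Real.rpow_neg h1.le s, Real.rpow_one]
  have h3 : (1 - x) ^ s ≠ 0 := by positivity
  field_simp
  try ring

lemma g1_spec (hs : s ∈ Set.Ioo (0:ℝ) 1) :
    IntegrableOn (fun u : ℝ => u ^ (-s) * (1 + u)⁻¹) (Ioi 0) ∧
    ∫ u in Ioi (0:ℝ), u ^ (-s) * (1 + u)⁻¹ = π / Real.sin (π * s) := by
  have hiff := integrableOn_image_iff_integrableOn_abs_deriv_smul measurableSet_Ioo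
    phi_deriv phi_inj (fun u : ℝ => u ^ (-s) * (1 + u)⁻¹)
  have heq := integral_image_eq_integral_abs_deriv_smul measurableSet_Ioo
    phi_deriv phi_inj (fun u : ℝ => u ^ (-s) * (1 + u)⁻¹)
  rw [phi_img] at hiff heq
  constructor
  · rw [hiff]
    exact (betaRealIntegrable hs).congr_fun (fun x hx => (g1_congr hs x hx).symm) measurableSet_Ioo
  · rw [heq, setIntegral_congr_fun measurableSet_Ioo (g1_congr hs), betaReal hs]

lemma g2_spec {lam : ℝ} (hl : 0 < lam) (hs : s ∈ Set.Ioo (0:ℝ) 1) :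
    IntegrableOn (fun v : ℝ => v ^ (-s) * (v + lam)⁻¹) (Ioi 0) ∧
    ∫ v in Ioi (0:ℝ), v ^ (-s) * (v + lam)⁻¹ = lam ^ (-s) * (π / Real.sin (π * s)) := by
  have himg : (fun u : ℝ => lam * u) '' Ioi 0 = Ioi (0:ℝ) := by
    ext v
    constructor
    · rintro ⟨u, hu, rfl⟩; exact mul_pos hl hu
    · intro hv; exact ⟨v / lam, div_pos hv hl, by field_simp⟩
  have hder : ∀ u ∈ Ioi (0:ℝ), HasDerivWithinAt (fun u : ℝ => lam * u) lam (Ioi 0) u := by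
    intro u _
    simpa using ((hasDerivAt_id u).const_mul lam).hasDerivWithinAt
  have hinj : InjOn (fun u : ℝ => lam * u) (Ioi 0) := fun a _ b _ h =>
    mul_left_cancel₀ hl.ne' h
  have hcongr : ∀ u ∈ Ioi (0:ℝ),
      |lam| • ((lam * u) ^ (-s) * (lam * u + lam)⁻¹)
        = lam ^ (-s) * (u ^ (-s) * (1 + u)⁻¹) := by
    intro u hu
    have hu0 : (0:ℝ) < u := hu
    rw [smul_eq_mul, abs_of_pos hl, Real.mul_rpow hl.le hu0.le,
      show lam * u + lam = lam * (1 + u) by ring, mul_inv]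
    rw [Real.rpow_neg hl.le]
    have : lam ^ s ≠ 0 := by positivity
    field_simp
  have hiff := integrableOn_image_iff_integrableOn_abs_deriv_smul measurableSet_Ioi
    hder hinj (fun v : ℝ => v ^ (-s) * (v + lam)⁻¹)
  have heq := integral_image_eq_integral_abs_deriv_smul measurableSet_Ioi
    hder hinj (fun v : ℝ => v ^ (-s) * (v + lam)⁻¹)
  rw [himg] at hiff heq
  obtain ⟨hint1, hval1⟩ := g1_spec hs
  constructor
  · rw [hiff]
    exact IntegrableOn.congr_fun (hint1.const_mul (lam ^ (-s)))
      (fun u hu => (hcongr u hu).symm) measurableSet_Ioi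
  · rw [heq, setIntegral_congr_fun measurableSet_Ioi hcongr,
      MeasureTheory.integral_const_mul, hval1]

lemma g3_spec {lam : ℝ} (hl : 0 < lam) (hs : s ∈ Set.Ioo (0:ℝ) 1) :
    Integrable (fun y : ℝ => Real.exp ((1 - s) * y) * (Real.exp y + lam)⁻¹) ∧
    ∫ y : ℝ, Real.exp ((1 - s) * y) * (Real.exp y + lam)⁻¹
      = lam ^ (-s) * (π / Real.sin (π * s)) := by
  have himg : Real.exp '' univ = Ioi (0:ℝ) := by
    rw [image_univ, Real.range_exp]
  have hder : ∀ y ∈ (univ : Set ℝ), HasDerivWithinAt Real.exp (Real.exp y) univ y :=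
    fun y _ => (Real.hasDerivAt_exp y).hasDerivWithinAt
  have hinj : InjOn Real.exp univ := Real.exp_injective.injOn
  have hcongr : ∀ y ∈ (univ : Set ℝ),
      |Real.exp y| • ((Real.exp y) ^ (-s) * (Real.exp y + lam)⁻¹)
        = Real.exp ((1 - s) * y) * (Real.exp y + lam)⁻¹ := by
    intro y _
    rw [smul_eq_mul, abs_of_pos (Real.exp_pos y),
      Real.rpow_def_of_pos (Real.exp_pos y), Real.log_exp, ← mul_assoc, ← Real.exp_add]
    ring_nf
  have hiff := integrableOn_image_iff_integrableOn_abs_deriv_smul MeasurableSet.univ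
    hder hinj (fun v : ℝ => v ^ (-s) * (v + lam)⁻¹)
  have heq := integral_image_eq_integral_abs_deriv_smul MeasurableSet.univ
    hder hinj (fun v : ℝ => v ^ (-s) * (v + lam)⁻¹)
  rw [himg] at hiff heq
  obtain ⟨hint2, hval2⟩ := g2_spec hl hs
  constructor
  · rw [← integrableOn_univ]
    rw [hiff] at hint2
    exact hint2.congr_fun hcongr MeasurableSet.univ
  · rw [← setIntegral_univ, setIntegral_congr_fun MeasurableSet.univ
      (fun y hy => (hcongr y hy).symm), ← heq, hval2]

end Key

open RealInnerProductSpace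
section Hilb
variable {H : Type*} [NormedAddCommGroup H] [InnerProductSpace ℝ H] [CompleteSpace H]
  {ψ : ℕ → H}

lemma summable_sq_smul (hψ : Orthonormal ℝ ψ) {a : ℕ → ℝ}
    (ha : Summable fun k => a k ^ 2) : Summable fun k => a k • ψ k := by
  have h := (hψ.orthogonalFamily.summable_iff_norm_sq_summable a).2
    (by simpa [Real.norm_eq_abs, sq_abs] using ha)
  simpa [LinearIsometry.toSpanSingleton_apply] using h

lemma norm_tsum_sq_le (hψ : Orthonormal ℝ ψ) {a : ℕ → ℝ}
    (ha : Summable fun k => a k ^ 2) :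
    ‖∑' k, a k • ψ k‖ ^ 2 ≤ ∑' k, a k ^ 2 := by
  have hsm : Summable fun k => a k • ψ k := summable_sq_smul hψ ha
  have hx := hsm.hasSum
  have ht : Filter.Tendsto (fun t : Finset ℕ => ‖∑ k ∈ t, a k • ψ k‖ ^ 2)
      Filter.atTop (nhds (‖∑' k, a k • ψ k‖ ^ 2)) := hx.norm.pow 2
  refine le_of_tendsto ht (Filter.Eventually.of_forall fun t => ?_)
  have hns := hψ.orthogonalFamily.norm_sum a t
  calc ‖∑ k ∈ t, a k • ψ k‖ ^ 2 = ∑ k ∈ t, a k ^ 2 := by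
        simpa [LinearIsometry.toSpanSingleton_apply, Real.norm_eq_abs, sq_abs] using hns
    _ ≤ ∑' k, a k ^ 2 := Summable.sum_le_tsum t (fun _ _ => sq_nonneg _) ha

lemma inner_tsum_smul {a : ℕ → ℝ} (ha : Summable fun k => a k • ψ k) (v : H) :
    ⟪v, ∑' k, a k • ψ k⟫ = ∑' k, a k * ⟪v, ψ k⟫ := by
  have h := (innerSL ℝ v).map_tsum ha
  simpa [inner_smul_right] using h

end Hilb

theorem stmt_14
    {H : Type*} [NormedAddCommGroup H] [InnerProductSpace ℝ H] [CompleteSpace H]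
    (ψ : ℕ → H) (hψ : Orthonormal ℝ ψ)
    (lam : ℕ → ℝ) (hlam1 : 0 < lam 1) (hlam : ∀ k, lam 1 ≤ lam k)
    (f : H) (s : ℝ) (hs : s ∈ Set.Ioo (0 : ℝ) 1) :
    Summable (fun k : ℕ => (lam k ^ (-s) * ⟪f, ψ k⟫) • ψ k) ∧
    Integrable (fun y : ℝ =>
      Real.exp ((1 - s) * y) • ∑' k : ℕ, ((Real.exp y + lam k)⁻¹ * ⟪f, ψ k⟫) • ψ k) ∧
    (∑' k : ℕ, (lam k ^ (-s) * ⟪f, ψ k⟫) • ψ k) =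
      (Real.sin (s * Real.pi) / Real.pi) •
        ∫ y : ℝ, Real.exp ((1 - s) * y) •
          ∑' k : ℕ, ((Real.exp y + lam k)⁻¹ * ⟪f, ψ k⟫) • ψ k := by
  obtain ⟨hs0, hs1⟩ := hs
  have hπ := Real.pi_pos
  have hsin : 0 < Real.sin (π * s) :=
    Real.sin_pos_of_pos_of_lt_pi (by positivity) (by nlinarith)
  set K : ℝ := π / Real.sin (π * s) with hK
  have hK0 : 0 < K := div_pos hπ hsin
  set c : ℕ → ℝ := fun k => ⟪f, ψ k⟫ with hc
  have hcsq : Summable fun k => c k ^ 2 := by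
    have := hψ.inner_products_summable f
    simpa [hc, real_inner_comm, Real.norm_eq_abs, sq_abs] using this
  have hlamk : ∀ k, 0 < lam k := fun k => lt_of_lt_of_le hlam1 (hlam k)
  -- Part 1
  have hAsq : Summable fun k => (lam k ^ (-s) * c k) ^ 2 := by
    refine Summable.of_nonneg_of_le (fun k => sq_nonneg _) (fun k => ?_)
      (hcsq.mul_left ((lam 1 ^ (-s)) ^ 2))
    have h1 : lam k ^ (-s) ≤ lam 1 ^ (-s) :=
      Real.rpow_le_rpow_of_nonpos hlam1 (hlam k) (by linarith)
    have h2 : (0:ℝ) ≤ lam k ^ (-s) := Real.rpow_nonneg (hlamk k).le _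
    rw [mul_pow]
    exact mul_le_mul_of_nonneg_right (pow_le_pow_left₀ h2 h1 2) (sq_nonneg _)
  have part1 : Summable fun k : ℕ => (lam k ^ (-s) * c k) • ψ k :=
    summable_sq_smul hψ hAsq
  -- summability of w(y)
  have hBsq : ∀ y : ℝ, Summable fun k => ((Real.exp y + lam k)⁻¹ * c k) ^ 2 := by
    intro y
    refine Summable.of_nonneg_of_le (fun k => sq_nonneg _) (fun k => ?_)
      (hcsq.mul_left ((Real.exp y + lam 1)⁻¹ ^ 2))
    have h0 : (0:ℝ) < Real.exp y + lam 1 := by positivity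
    have h1 : (Real.exp y + lam k)⁻¹ ≤ (Real.exp y + lam 1)⁻¹ := by
      apply inv_anti₀ h0; linarith [hlam k]
    rw [mul_pow]
    exact mul_le_mul_of_nonneg_right
      (pow_le_pow_left₀ (inv_nonneg.mpr (add_pos (Real.exp_pos y) (hlamk k)).le) h1 2)
      (sq_nonneg _)
  have hWsum : ∀ y : ℝ, Summable fun k => ((Real.exp y + lam k)⁻¹ * c k) • ψ k :=
    fun y => summable_sq_smul hψ (hBsq y)
  set W : ℝ → H := fun y => ∑' k, ((Real.exp y + lam k)⁻¹ * c k) • ψ k with hW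
  -- measurability
  have hWmeas : StronglyMeasurable W := by
    refine stronglyMeasurable_of_tendsto Filter.atTop
      (f := fun n (y : ℝ) => ∑ k ∈ Finset.range n, ((Real.exp y + lam k)⁻¹ * c k) • ψ k)
      (fun n => ?_) ?_
    · refine Continuous.stronglyMeasurable ?_
      refine continuous_finset_sum _ fun k _ => ?_
      have hcont : Continuous fun y : ℝ => (Real.exp y + lam k)⁻¹ * c k :=
        ((Real.continuous_exp.add continuous_const).inv₀
          (fun y => (add_pos (Real.exp_pos y) (hlamk k)).ne')).mul continuous_const
      exact hcont.smul continuous_const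
    · rw [tendsto_pi_nhds]
      exact fun y => (hWsum y).hasSum.tendsto_sum_nat
  have hFmeas : AEStronglyMeasurable
      (fun y : ℝ => Real.exp ((1 - s) * y) • W y) volume :=
    ((Real.continuous_exp.comp
      (continuous_const.mul continuous_id)).stronglyMeasurable.smul
        hWmeas).aestronglyMeasurable
  -- norm bound
  set C : ℝ := Real.sqrt (∑' k, c k ^ 2) with hCdef
  have hC0 : 0 ≤ C := Real.sqrt_nonneg _
  have hWle : ∀ y : ℝ, ‖W y‖ ≤ (Real.exp y + lam 1)⁻¹ * C := by
    intro y
    have h0 : (0:ℝ) < Real.exp y + lam 1 := by positivity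
    have hb := norm_tsum_sq_le hψ (hBsq y)
    have hb2 : ∑' k, ((Real.exp y + lam k)⁻¹ * c k) ^ 2
        ≤ (Real.exp y + lam 1)⁻¹ ^ 2 * ∑' k, c k ^ 2 := by
      rw [← tsum_mul_left]
      refine Summable.tsum_le_tsum (fun k => ?_) (hBsq y) (hcsq.mul_left _)
      have h1 : (Real.exp y + lam k)⁻¹ ≤ (Real.exp y + lam 1)⁻¹ := by
        apply inv_anti₀ h0; linarith [hlam k]
      rw [mul_pow]
      exact mul_le_mul_of_nonneg_right
        (pow_le_pow_left₀ (inv_nonneg.mpr (add_pos (Real.exp_pos y) (hlamk k)).le) h1 2)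
        (sq_nonneg _)
    have hsq : ‖W y‖ ^ 2 ≤ ((Real.exp y + lam 1)⁻¹ * C) ^ 2 := by
      rw [mul_pow, hCdef, Real.sq_sqrt (tsum_nonneg fun k => sq_nonneg _)]
      exact hb.trans hb2
    have hnn : (0:ℝ) ≤ (Real.exp y + lam 1)⁻¹ * C := by positivity
    nlinarith [norm_nonneg (W y)]
  -- Part 2
  have part2 : Integrable (fun y : ℝ => Real.exp ((1 - s) * y) • W y) := by
    refine Integrable.mono' ((g3_spec hlam1 ⟨hs0, hs1⟩).1.mul_const C) hFmeas
      (Filter.Eventually.of_forall fun y => ?_)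
    simp only [norm_smul, Real.norm_eq_abs, Real.abs_exp]
    calc Real.exp ((1 - s) * y) * ‖W y‖
        ≤ Real.exp ((1 - s) * y) * ((Real.exp y + lam 1)⁻¹ * C) :=
          mul_le_mul_of_nonneg_left (hWle y) (Real.exp_pos _).le
      _ = Real.exp ((1 - s) * y) * (Real.exp y + lam 1)⁻¹ * C := by ring
  refine ⟨part1, part2, ?_⟩
  -- Part 3
  refine ext_inner_left ℝ fun v => ?_
  set b : ℕ → ℝ := fun k => ⟪v, ψ k⟫ with hb
  have hbsq : Summable fun k => b k ^ 2 := by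
    have := hψ.inner_products_summable v
    simpa [hb, real_inner_comm, Real.norm_eq_abs, sq_abs] using this
  have habs : Summable fun k => |c k * b k| := by
    refine Summable.of_nonneg_of_le (fun k => abs_nonneg _) (fun k => ?_)
      ((hcsq.add hbsq).div_const 2)
    have h1 := sq_nonneg (|c k| - |b k|)
    have h2 := sq_abs (c k)
    have h3 := sq_abs (b k)
    rw [abs_mul]
    nlinarith [abs_nonneg (c k), abs_nonneg (b k)]
  set G : ℕ → ℝ → ℝ := fun k y =>
    c k * b k * (Real.exp ((1 - s) * y) * (Real.exp y + lam k)⁻¹) with hG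
  have hGint : ∀ k, Integrable (G k) := fun k =>
    ((g3_spec (hlamk k) ⟨hs0, hs1⟩).1.const_mul (c k * b k))
  have hGval : ∀ k, ∫ y, G k y = c k * b k * (lam k ^ (-s) * K) := by
    intro k
    rw [hG]
    rw [MeasureTheory.integral_const_mul, (g3_spec (hlamk k) ⟨hs0, hs1⟩).2]
  have hlint : ∀ k, (∫⁻ y, ‖G k y‖₊ ∂volume)
      = ENNReal.ofReal (|c k * b k| * (lam k ^ (-s) * K)) := by
    intro k
    simp_rw [← enorm_eq_nnnorm]
    rw [← MeasureTheory.ofReal_integral_norm_eq_lintegral_enorm (hGint k)]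
    congr 1
    calc ∫ y, ‖G k y‖
        = ∫ y, |c k * b k| * (Real.exp ((1 - s) * y) * (Real.exp y + lam k)⁻¹) := by
          refine integral_congr_ae (Filter.Eventually.of_forall fun y => ?_)
          show ‖G k y‖ = |c k * b k| * (Real.exp ((1 - s) * y) * (Real.exp y + lam k)⁻¹)
          have hGy : G k y = c k * b k * (Real.exp ((1 - s) * y) * (Real.exp y + lam k)⁻¹) :=
            rfl
          rw [hGy, Real.norm_eq_abs, abs_mul, abs_of_nonneg (mul_nonneg (Real.exp_pos _).le
            (inv_nonneg.mpr (add_pos (Real.exp_pos y) (hlamk k)).le))]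
      _ = |c k * b k| * (lam k ^ (-s) * K) := by
          rw [MeasureTheory.integral_const_mul, (g3_spec (hlamk k) ⟨hs0, hs1⟩).2]
  have hsum_d : Summable fun k => |c k * b k| * (lam k ^ (-s) * K) := by
    refine Summable.of_nonneg_of_le
      (fun k => mul_nonneg (abs_nonneg _)
        (mul_nonneg (Real.rpow_nonneg (hlamk k).le _) hK0.le))
      (fun k => ?_) (habs.mul_right (lam 1 ^ (-s) * K))
    have h1 : lam k ^ (-s) ≤ lam 1 ^ (-s) :=
      Real.rpow_le_rpow_of_nonpos hlam1 (hlam k) (by linarith)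
    exact mul_le_mul_of_nonneg_left
      (mul_le_mul_of_nonneg_right h1 hK0.le) (abs_nonneg _)
  have hne : (∑' k, ∫⁻ y, ‖G k y‖₊ ∂volume) ≠ ⊤ := by
    simp_rw [hlint]
    rw [← ENNReal.ofReal_tsum_of_nonneg
      (fun k => mul_nonneg (abs_nonneg _)
        (mul_nonneg (Real.rpow_nonneg (hlamk k).le _) hK0.le)) hsum_d]
    exact ENNReal.ofReal_ne_top
  have hswap : (∫ y : ℝ, ∑' k, G k y) = ∑' k, ∫ y, G k y :=
    MeasureTheory.integral_tsum (fun k => (hGint k).aestronglyMeasurable) hne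
  have hpt : ∀ y : ℝ, ⟪v, Real.exp ((1 - s) * y) • W y⟫ = ∑' k, G k y := by
    intro y
    rw [real_inner_smul_right, hW]
    rw [inner_tsum_smul (hWsum y) v, ← tsum_mul_left]
    exact tsum_congr fun k => by rw [hG]; ring
  have hL : ⟪v, ∑' k, (lam k ^ (-s) * c k) • ψ k⟫ = ∑' k, (lam k ^ (-s) * c k) * b k :=
    inner_tsum_smul part1 v
  have hrK : Real.sin (s * π) / π * K = 1 := by
    rw [hK, mul_comm s π]
    have h1 := hsin.ne'
    have h2 := hπ.ne'
    field_simp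
  calc ⟪v, ∑' k, (lam k ^ (-s) * c k) • ψ k⟫
      = ∑' k, (lam k ^ (-s) * c k) * b k := hL
    _ = ∑' k, Real.sin (s * π) / π * (c k * b k * (lam k ^ (-s) * K)) := by
        refine tsum_congr fun k => ?_
        have h : Real.sin (s * π) / π * (c k * b k * (lam k ^ (-s) * K))
            = (Real.sin (s * π) / π * K) * (lam k ^ (-s) * c k * b k) := by ring
        rw [h, hrK, one_mul, mul_assoc]
    _ = Real.sin (s * π) / π * ∑' k, c k * b k * (lam k ^ (-s) * K) := tsum_mul_left
    _ = Real.sin (s * π) / π * ∑' k, ∫ y, G k y := by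
        refine congrArg _ (tsum_congr fun k => (hGval k).symm)
    _ = Real.sin (s * π) / π * ∫ y : ℝ, ∑' k, G k y := by rw [hswap]
    _ = Real.sin (s * π) / π * ∫ y : ℝ, ⟪v, Real.exp ((1 - s) * y) • W y⟫ := by
        refine congrArg _ (integral_congr_ae (Filter.Eventually.of_forall
          fun y => (hpt y).symm))
    _ = Real.sin (s * π) / π * ⟪v, ∫ y : ℝ, Real.exp ((1 - s) * y) • W y⟫ := by
        rw [integral_inner part2 v]
    _ = ⟪v, (Real.sin (s * π) / π) • ∫ y : ℝ, Real.exp ((1 - s) * y) • W y⟫ := by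
        rw [real_inner_smul_right]
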